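/- Let (R_n)_{n≥0} be a cyclic urn process with m types started with one ball of type 0. For all k, ℓ ∈ {0,…,m−1} and all n ≥ 0, E[u_k(R_n)·u_ℓ(R_n)] = Π_{s=1}^{n} ((s + ω^k + ω^ℓ)/s) + Σ_{s=1}^{n} (ω^{k+ℓ}/s) · Π_{t=1}^{s−1} ((t + ω^{k+ℓ})/t) · Π_{t=s+1}^{n} ((t + ω^k + ω^ℓ)/t), where empty products equal 1. -/

import Mathlib

open MeasureTheory ProbabilityTheory Filter Complex Finset Topology

noncomputable section

/-- `ω = exp(2πi/m)`, the `m`-th elementary root of unity. -/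
def cw (m : ℕ) : ℂ := Complex.exp (2 * Real.pi * Complex.I / m)

/-- `λ_k = cos(2πk/m)`. -/
def lam (m k : ℕ) : ℝ := Real.cos (2 * Real.pi * k / m)

/-- `μ_k = sin(2πk/m)`. -/
def muim (m k : ℕ) : ℝ := Real.sin (2 * Real.pi * k / m)

/-- the eigenvector `v_k = (1/m)(1, ω^{-k}, …, ω^{-(m-1)k})`. -/
def vvec (m k : ℕ) : Fin m → ℂ :=
  fun t => (m : ℂ)⁻¹ * cw m ^ (-((k * (t : ℕ) : ℕ) : ℤ))

/-- the dual coefficient `u_k(w) = ∑_t ω^{kt} w_t`. -/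
def ucoef (m k : ℕ) (w : Fin m → ℝ) : ℂ :=
  ∑ t : Fin m, cw m ^ (k * (t : ℕ)) * (w t : ℂ)

/-- the replacement matrix `A` of the cyclic urn. -/
def repA (m : ℕ) : Matrix (Fin m) (Fin m) ℝ :=
  Matrix.of fun i j => if (j : ℕ) = ((i : ℕ) + 1) % m then 1 else 0

/-- the filtration `𝓕_n = σ(R_0, …, R_n)`. -/
def urnFilt {Ω : Type*} [MeasurableSpace Ω] (m : ℕ) (R : ℕ → Ω → Fin m → ℝ) (n : ℕ) :
    MeasurableSpace Ω :=
  ⨆ i ∈ Finset.range (n + 1), MeasurableSpace.comap (R i) inferInstance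

/-- A cyclic urn process with `m` types started with one ball of type `j0`. -/
structure IsCyclicUrn {Ω : Type*} [MeasurableSpace Ω] (μ : Measure Ω) (m : ℕ) (j0 : Fin m)
    (R : ℕ → Ω → Fin m → ℝ) : Prop where
  isProb : IsProbabilityMeasure μ
  meas : ∀ n, Measurable (R n)
  natVal : ∀ n ω i, ∃ z : ℕ, R n ω i = z
  init : ∀ ω, R 0 ω = fun i => if i = j0 then 1 else 0
  step : ∀ n, ∀ j : Fin m,
    μ[Set.indicator {ω | R (n + 1) ω =
        fun i => R n ω i + if (i : ℕ) = ((j : ℕ) + 1) % m then 1 else 0}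
      (fun _ => (1 : ℝ)) | urnFilt m R n]
      =ᵐ[μ] fun ω => R n ω j / (n + 1)

/-- componentwise expectation `E[X]` of a random vector. -/
def expVec {Ω : Type*} [MeasurableSpace Ω] (μ : Measure Ω) {m : ℕ}
    (X : Ω → Fin m → ℝ) : Fin m → ℝ := fun i => ∫ ω, X ω i ∂μ

/-- the martingale `M_{k,n} = (Γ(n+1)/Γ(n+1+ω^k)) u_k(R_n - E[R_n])`, with `M_{k,0} = 0`. -/
def Mart {Ω : Type*} [MeasurableSpace Ω] (μ : Measure Ω) (m k : ℕ)
    (R : ℕ → Ω → Fin m → ℝ) (n : ℕ) (ω : Ω) : ℂ :=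
  if n = 0 then 0
  else (Complex.Gamma ((n : ℂ) + 1) / Complex.Gamma ((n : ℂ) + 1 + cw m ^ k)) *
    ucoef m k (fun t => R n ω t - expVec μ (R n) t)

/-- `ν` is the centered Gaussian distribution `𝒩(0, S)` on `ℝ^d` (Cramér–Wold
characterization: every linear functional is one-dimensional centered Gaussian). -/
def IsCenteredGaussian {d : ℕ} (ν : Measure (Fin d → ℝ)) (S : Matrix (Fin d) (Fin d) ℝ) : Prop :=
  IsProbabilityMeasure ν ∧
  ∀ l : Fin d → ℝ,
    ν.map (fun x => ∑ i, l i * x i) =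
      gaussianReal 0 (Real.toNNReal (∑ i, ∑ j, l i * S i j * l j))

/-- convergence in distribution of the random vectors `X_n` to the law `ν`. -/
def TendstoInDist {Ω : Type*} [MeasurableSpace Ω] (μ : Measure Ω) {d : ℕ}
    (X : ℕ → Ω → Fin d → ℝ) (ν : Measure (Fin d → ℝ)) : Prop :=
  ∀ f : BoundedContinuousFunction (Fin d → ℝ) ℝ,
    Tendsto (fun n => ∫ ω, f (X n ω) ∂μ) atTop (𝓝 (∫ x, f x ∂ν))


lemma cw_pow_m {m : ℕ} (hm : 0 < m) : cw m ^ m = 1 := by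
  rw [cw, ← Complex.exp_nat_mul]
  rw [show (m : ℂ) * (2 * Real.pi * Complex.I / m) = 2 * Real.pi * Complex.I by
    rw [mul_div_assoc']; exact mul_div_cancel_left₀ _ (by exact_mod_cast hm.ne')]
  exact Complex.exp_two_pi_mul_I

lemma cw_abs (m : ℕ) : ‖cw m‖ = 1 := by
  rw [cw, Complex.norm_exp]
  simp [Complex.div_re]

lemma cw_pow_mod {m : ℕ} (hm : 0 < m) (a : ℕ) : cw m ^ a = cw m ^ (a % m) := by
  conv_lhs => rw [← Nat.div_add_mod a m]
  rw [pow_add, pow_mul, cw_pow_m hm, one_pow, one_mul]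

set_option linter.unusedSectionVars false

/-- the added unit vector -/
def evec (m : ℕ) (j : Fin m) : Fin m → ℝ := fun i => if (i : ℕ) = ((j : ℕ) + 1) % m then 1 else 0

/-- the event of the step -/
def Aset {Ω : Type*} {m : ℕ} (R : ℕ → Ω → Fin m → ℝ) (n : ℕ) (j : Fin m) : Set Ω :=
  {ω | R (n + 1) ω = fun i => R n ω i + evec m j i}

section Urn
variable {Ω : Type*} [MeasurableSpace Ω] {μ : Measure Ω} {m : ℕ}
  {R : ℕ → Ω → Fin m → ℝ} (hm : 2 ≤ m) (hR : IsCyclicUrn μ m ⟨0, by linarith⟩ R)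
include hm hR

lemma urnFilt_le (n : ℕ) : urnFilt m R n ≤ ‹MeasurableSpace Ω› := by
  refine iSup₂_le fun i _ => ?_
  exact MeasurableSpace.comap_le_iff_le_map.mpr fun s hs => (hR.meas i) hs

lemma measR_filt (n : ℕ) : Measurable[urnFilt m R n] (R n) := by
  rw [measurable_iff_comap_le]
  exact le_iSup₂ (f := fun i (_ : i ∈ Finset.range (n+1)) =>
    MeasurableSpace.comap (R i) inferInstance) n (Finset.self_mem_range_succ n)

lemma Aset_meas (n : ℕ) (j : Fin m) : MeasurableSet (Aset R n j) := by
  have hg : Measurable (fun ω => fun i => R n ω i + evec m j i) :=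
    measurable_pi_iff.mpr fun i => ((measurable_pi_apply i).comp (hR.meas n)).add_const _
  exact measurableSet_eq_fun (hR.meas (n+1)) hg

lemma step' (n : ℕ) (j : Fin m) :
    μ[Set.indicator (Aset R n j) (fun _ => (1 : ℝ)) | urnFilt m R n]
      =ᵐ[μ] fun ω => R n ω j / (n + 1) := hR.step n j

lemma key_pullout (n : ℕ) (j : Fin m) {φ : (Fin m → ℝ) → ℝ} (hφ : Measurable φ)
    {C : ℝ} (hb : ∀ᵐ ω ∂μ, |φ (R n ω)| ≤ C) :
    ∫ ω, Set.indicator (Aset R n j) (fun _ => (1:ℝ)) ω * φ (R n ω) ∂μ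
      = ∫ ω, (R n ω j / (n + 1)) * φ (R n ω) ∂μ := by
  haveI := hR.isProb
  have hle := urnFilt_le hm hR n
  haveI : SigmaFinite (μ.trim hle) := (isFiniteMeasure_trim hle).toSigmaFinite
  set g := Set.indicator (Aset R n j) (fun _ => (1:ℝ)) with hgdef
  set f := fun ω => φ (R n ω) with hfdef
  have hfmeas : StronglyMeasurable[urnFilt m R n] f :=
    (hφ.comp (measR_filt hm hR n)).stronglyMeasurable
  have hg_meas : Measurable g := (measurable_const.indicator (Aset_meas hm hR n j))
  have hg_int : Integrable g μ := (integrable_const 1).indicator (Aset_meas hm hR n j)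
  have hfg_int : Integrable (f * g) μ := by
    refine Integrable.mono' (integrable_const C) ?_ ?_
    · exact ((hφ.comp (hR.meas n)).mul hg_meas).aestronglyMeasurable
    · filter_upwards [hb] with ω hω
      have hg1 : |g ω| ≤ 1 := by
        rw [hgdef]
        by_cases h : ω ∈ Aset R n j <;> simp [Set.indicator_apply, h]
      have hC : 0 ≤ C := le_trans (abs_nonneg _) hω
      calc ‖(f * g) ω‖ = |f ω| * |g ω| := by simp [abs_mul]
        _ ≤ C * 1 := mul_le_mul hω hg1 (abs_nonneg _) hC
        _ = C := mul_one C
  calc ∫ ω, g ω * f ω ∂μ = ∫ ω, (f * g) ω ∂μ := by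
        congr 1; ext ω; exact mul_comm _ _
    _ = ∫ ω, (μ[f * g | urnFilt m R n]) ω ∂μ := (integral_condExp hle).symm
    _ = ∫ ω, f ω * (μ[g | urnFilt m R n]) ω ∂μ := by
        refine integral_congr_ae ?_
        filter_upwards [condExp_mul_of_stronglyMeasurable_left hfmeas hfg_int hg_int] with ω hω
        exact hω
    _ = ∫ ω, f ω * (R n ω j / (n + 1)) ∂μ := by
        refine integral_congr_ae ?_
        filter_upwards [step' hm hR n j] with ω hω
        rw [hω]
    _ = ∫ ω, (R n ω j / (n + 1)) * f ω ∂μ := by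
        congr 1; ext ω; exact mul_comm _ _

omit hR in
lemma evec_sum (j : Fin m) : ∑ i, evec m j i = 1 := by
  have hm0 : 0 < m := by omega
  set i0 : Fin m := ⟨((j : ℕ) + 1) % m, Nat.mod_lt _ hm0⟩ with hi0
  calc ∑ i, evec m j i = ∑ i, if i = i0 then (1:ℝ) else 0 := by
        refine Finset.sum_congr rfl fun i _ => ?_
        simp only [evec, Fin.ext_iff, hi0]
    _ = 1 := by simp

omit hR in
lemma Aset_disj {n : ℕ} {ω : Ω} {j j' : Fin m} (h : ω ∈ Aset R n j)
    (h' : ω ∈ Aset R n j') : j = j' := by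
  have hm0 : 0 < m := by omega
  have he : evec m j = evec m j' := by
    funext i
    have := congrFun (h.symm.trans h') i
    simpa using this
  have h1 : evec m j' ⟨((j : ℕ) + 1) % m, Nat.mod_lt _ hm0⟩ = 1 := by
    rw [← he]; simp [evec]
  simp only [evec] at h1
  have hmod : ((j : ℕ) + 1) % m = ((j' : ℕ) + 1) % m := by
    by_contra hne
    rw [if_neg hne] at h1
    norm_num at h1
  have hjj : (j : ℕ) % m = (j' : ℕ) % m :=
    Nat.ModEq.add_right_cancel' 1 (hmod : ((j:ℕ)+1) ≡ ((j':ℕ)+1) [MOD m])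
  rw [Nat.mod_eq_of_lt j.isLt, Nat.mod_eq_of_lt j'.isLt] at hjj
  exact Fin.ext hjj

lemma ind_sum_le_one (n : ℕ) (ω : Ω) :
    ∑ j : Fin m, Set.indicator (Aset R n j) (fun _ => (1:ℝ)) ω ≤ 1 := by
  by_cases h : ∃ j, ω ∈ Aset R n j
  · obtain ⟨j0, hj0⟩ := h
    have : ∑ j : Fin m, Set.indicator (Aset R n j) (fun _ => (1:ℝ)) ω
        = Set.indicator (Aset R n j0) (fun _ => (1:ℝ)) ω := by
      refine Finset.sum_eq_single j0 (fun j _ hj => ?_) (fun h => absurd (Finset.mem_univ _) h)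
      have : ω ∉ Aset R n j := fun hmem => hj (Aset_disj hm hmem hj0)
      simp [Set.indicator_apply, this]
    rw [this]
    simp [Set.indicator_apply, hj0]
  · push_neg at h
    have : ∀ j : Fin m, Set.indicator (Aset R n j) (fun _ => (1:ℝ)) ω = 0 := fun j => by
      simp [Set.indicator_apply, h j]
    simp [this]

lemma R_nonneg (n : ℕ) (ω : Ω) (i : Fin m) : 0 ≤ R n ω i := by
  obtain ⟨z, hz⟩ := hR.natVal n ω i
  rw [hz]; positivity

lemma oneA (n : ℕ) (hs : ∀ᵐ ω ∂μ, ∑ j, R n ω j = n + 1) :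
    ∀ᵐ ω ∂μ, ∑ j : Fin m, Set.indicator (Aset R n j) (fun _ => (1:ℝ)) ω = 1 := by
  haveI := hR.isProb
  have hle := urnFilt_le hm hR n
  haveI : SigmaFinite (μ.trim hle) := (isFiniteMeasure_trim hle).toSigmaFinite
  set S : Ω → ℝ := fun ω => ∑ j : Fin m, Set.indicator (Aset R n j) (fun _ => (1:ℝ)) ω
    with hSdef
  have hind_int : ∀ j : Fin m, Integrable
      (Set.indicator (Aset R n j) (fun _ => (1:ℝ))) μ :=
    fun j => (integrable_const 1).indicator (Aset_meas hm hR n j)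
  have hS_int : Integrable S μ := integrable_finset_sum _ fun j _ => hind_int j
  have hRj_int : ∀ j : Fin m, Integrable (fun ω => R n ω j / (n + 1)) μ := by
    intro j
    refine Integrable.mono' (integrable_const ((n:ℝ) + 1)) ?_ ?_
    · exact (((measurable_pi_apply j).comp (hR.meas n)).div_const _).aestronglyMeasurable
    · filter_upwards [hs] with ω hω
      have h0 : 0 ≤ R n ω j := R_nonneg hm hR n ω j
      have hle1 : R n ω j ≤ (n : ℝ) + 1 := by
        rw [← hω]
        exact Finset.single_le_sum (fun i _ => R_nonneg hm hR n ω i) (Finset.mem_univ j)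
      rw [Real.norm_eq_abs, _root_.abs_of_nonneg (by positivity)]
      calc R n ω j / ((n:ℝ) + 1) ≤ R n ω j := by
            apply div_le_self h0; norm_num
        _ ≤ (n : ℝ) + 1 := hle1
  have hSint_eq : ∫ ω, S ω ∂μ = 1 := by
    rw [hSdef]
    rw [integral_finset_sum _ fun j _ => hind_int j]
    have : ∀ j : Fin m, ∫ ω, Set.indicator (Aset R n j) (fun _ => (1:ℝ)) ω ∂μ
        = ∫ ω, R n ω j / (n + 1) ∂μ := by
      intro j
      rw [← integral_condExp hle]
      exact integral_congr_ae (step' hm hR n j)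
    rw [Finset.sum_congr rfl fun j _ => this j]
    rw [← integral_finset_sum _ fun j _ => hRj_int j]
    have : ∫ ω, ∑ j : Fin m, R n ω j / (n + 1) ∂μ = ∫ ω, (1:ℝ) ∂μ := by
      refine integral_congr_ae ?_
      filter_upwards [hs] with ω hω
      rw [← Finset.sum_div, hω]
      field_simp
    rw [this]
    simp
  have hnonneg : ∀ᵐ ω ∂μ, 0 ≤ 1 - S ω := by
    refine Eventually.of_forall fun ω => ?_
    have := ind_sum_le_one hm hR n ω
    simpa [hSdef] using this
  have hint0 : ∫ ω, (1 - S ω) ∂μ = 0 := by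
    rw [integral_sub (integrable_const 1) hS_int]
    simp [hSint_eq]
  have := (integral_eq_zero_iff_of_nonneg_ae hnonneg
    ((integrable_const 1).sub hS_int)).mp hint0
  filter_upwards [this] with ω hω
  have : 1 - S ω = 0 := hω
  linarith [this]

lemma exists_step {n : ℕ} {ω : Ω}
    (h : ∑ j : Fin m, Set.indicator (Aset R n j) (fun _ => (1:ℝ)) ω = 1) :
    ∃ j : Fin m, R (n + 1) ω = fun i => R n ω i + evec m j i := by
  by_contra hc
  push_neg at hc
  have : ∀ j : Fin m, Set.indicator (Aset R n j) (fun _ => (1:ℝ)) ω = 0 := by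
    intro j
    have : ω ∉ Aset R n j := hc j
    simp [Set.indicator_apply, this]
  rw [Finset.sum_congr rfl fun j _ => this j] at h
  simp at h

lemma sumR : ∀ n : ℕ, ∀ᵐ ω ∂μ, ∑ j, R n ω j = n + 1 := by
  intro n
  induction n with
  | zero =>
    refine Eventually.of_forall fun ω => ?_
    rw [hR.init ω]
    simp
  | succ n ih =>
    filter_upwards [ih, oneA hm hR n ih] with ω hsum hone
    obtain ⟨j, hj⟩ := exists_step hm hR hone
    rw [hj]
    rw [Finset.sum_add_distrib, hsum, evec_sum hm j]
    push_cast
    ring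

omit hm hR in
lemma ucoef_abs_le {k : ℕ} {w : Fin m → ℝ} {C : ℝ} (hC : ∀ t, |w t| ≤ C) :
    ‖ucoef m k w‖ ≤ m * C := by
  calc ‖ucoef m k w‖ ≤ ∑ t : Fin m, ‖cw m ^ (k * (t:ℕ)) * (w t : ℂ)‖ := by
        exact norm_sum_le _ _
    _ ≤ ∑ t : Fin m, C := by
        refine Finset.sum_le_sum fun t _ => ?_
        rw [norm_mul, norm_pow, cw_abs, one_pow, one_mul, Complex.norm_real, Real.norm_eq_abs]
        exact hC t
    _ = m * C := by simp [mul_comm]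

lemma key_pullout_c (n : ℕ) (j : Fin m) {φ : (Fin m → ℝ) → ℂ} (hφ : Measurable φ)
    {C : ℝ} (hb : ∀ᵐ ω ∂μ, ‖φ (R n ω)‖ ≤ C) :
    ∫ ω, Complex.ofReal (Set.indicator (Aset R n j) (fun _ => (1:ℝ)) ω) * φ (R n ω) ∂μ
      = ∫ ω, Complex.ofReal (R n ω j / (n+1)) * φ (R n ω) ∂μ := by
  haveI := hR.isProb
  have hmeas1 : AEStronglyMeasurable
      (fun ω => Complex.ofReal (Set.indicator (Aset R n j) (fun _ => (1:ℝ)) ω) * φ (R n ω)) μ := by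
    refine (Measurable.mul ?_ (hφ.comp (hR.meas n))).aestronglyMeasurable
    exact Complex.measurable_ofReal.comp (measurable_const.indicator (Aset_meas hm hR n j))
  have hmeas2 : AEStronglyMeasurable
      (fun ω => Complex.ofReal (R n ω j / (n+1)) * φ (R n ω)) μ := by
    refine (Measurable.mul ?_ (hφ.comp (hR.meas n))).aestronglyMeasurable
    exact Complex.measurable_ofReal.comp (((measurable_pi_apply j).comp (hR.meas n)).div_const _)
  have hind_le : ∀ ω, |Set.indicator (Aset R n j) (fun _ => (1:ℝ)) ω| ≤ 1 := by
    intro ω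
    by_cases h : ω ∈ Aset R n j <;> simp [Set.indicator_apply, h]
  have hq_le : ∀ᵐ ω ∂μ, |R n ω j / ((n:ℝ)+1)| ≤ 1 := by
    filter_upwards [sumR hm hR n] with ω hω
    have h0 : 0 ≤ R n ω j := R_nonneg hm hR n ω j
    have hle1 : R n ω j ≤ (n : ℝ) + 1 := by
      rw [← hω]
      exact Finset.single_le_sum (fun i _ => R_nonneg hm hR n ω i) (Finset.mem_univ j)
    rw [_root_.abs_of_nonneg (by positivity)]
    rw [div_le_one (by positivity)]
    exact hle1
  have hC0 : 0 ≤ C := by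
    rcases hb.exists with ⟨ω, hω⟩
    exact le_trans (norm_nonneg _) hω
  have h1 : Integrable
      (fun ω => Complex.ofReal (Set.indicator (Aset R n j) (fun _ => (1:ℝ)) ω) * φ (R n ω)) μ := by
    refine Integrable.mono' (integrable_const C) hmeas1 ?_
    filter_upwards [hb] with ω hω
    rw [norm_mul, Complex.norm_real, Real.norm_eq_abs]
    calc |Set.indicator (Aset R n j) (fun _ => (1:ℝ)) ω| * ‖φ (R n ω)‖
        ≤ 1 * C := mul_le_mul (hind_le ω) hω (norm_nonneg _) one_pos.le
      _ = C := one_mul C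
  have h2 : Integrable (fun ω => Complex.ofReal (R n ω j / (n+1)) * φ (R n ω)) μ := by
    refine Integrable.mono' (integrable_const C) hmeas2 ?_
    filter_upwards [hb, hq_le] with ω hω hq
    rw [norm_mul, Complex.norm_real, Real.norm_eq_abs]
    calc |R n ω j / ((n:ℝ)+1)| * ‖φ (R n ω)‖
        ≤ 1 * C := mul_le_mul hq hω (norm_nonneg _) one_pos.le
      _ = C := one_mul C
  have key : ∀ (ψ : (Fin m → ℝ) → ℝ), Measurable ψ → (∀ z, |ψ z| ≤ ‖φ z‖) →
      ∫ ω, Set.indicator (Aset R n j) (fun _ => (1:ℝ)) ω * ψ (R n ω) ∂μ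
        = ∫ ω, (R n ω j / (n + 1)) * ψ (R n ω) ∂μ := by
    intro ψ hψ hψb
    refine key_pullout hm hR n j hψ (C := C) ?_
    filter_upwards [hb] with ω hω
    exact le_trans (hψb _) hω
  apply Complex.ext
  · rw [← RCLike.re_to_complex, ← integral_re h1]
    conv_rhs => rw [← RCLike.re_to_complex, ← integral_re h2]
    simp only [RCLike.re_to_complex]
    have e1 : ∀ ω, (Complex.ofReal (Set.indicator (Aset R n j) (fun _ => (1:ℝ)) ω) * φ (R n ω)).re
        = Set.indicator (Aset R n j) (fun _ => (1:ℝ)) ω * (φ (R n ω)).re := by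
      intro ω; exact Complex.re_ofReal_mul _ _
    have e2 : ∀ ω, (Complex.ofReal (R n ω j / (n+1)) * φ (R n ω)).re
        = (R n ω j / ((n:ℝ)+1)) * (φ (R n ω)).re := by
      intro ω; exact Complex.re_ofReal_mul _ _
    simp only [e1, e2]
    exact key (fun z => (φ z).re) (Complex.measurable_re.comp hφ)
      (fun z => Complex.abs_re_le_norm _)
  · rw [← RCLike.im_to_complex, ← integral_im h1]
    conv_rhs => rw [← RCLike.im_to_complex, ← integral_im h2]
    simp only [RCLike.im_to_complex]
    have e1 : ∀ ω, (Complex.ofReal (Set.indicator (Aset R n j) (fun _ => (1:ℝ)) ω) * φ (R n ω)).im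
        = Set.indicator (Aset R n j) (fun _ => (1:ℝ)) ω * (φ (R n ω)).im := by
      intro ω; exact Complex.im_ofReal_mul _ _
    have e2 : ∀ ω, (Complex.ofReal (R n ω j / (n+1)) * φ (R n ω)).im
        = (R n ω j / ((n:ℝ)+1)) * (φ (R n ω)).im := by
      intro ω; exact Complex.im_ofReal_mul _ _
    simp only [e1, e2]
    exact key (fun z => (φ z).im) (Complex.measurable_im.comp hφ)
      (fun z => Complex.abs_im_le_norm _)

omit hm hR in
lemma ucoef_meas (q : ℕ) : Measurable (fun w : Fin m → ℝ => ucoef m q w) := by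
  apply Finset.measurable_sum
  intro t _
  exact (Complex.measurable_ofReal.comp (measurable_pi_apply t)).const_mul _

omit hR in
lemma ucoef_shift (q : ℕ) (w : Fin m → ℝ) (j : Fin m) :
    ucoef m q (fun i => w i + evec m j i) = ucoef m q w + cw m ^ q * cw m ^ (q * (j : ℕ)) := by
  have hm0 : 0 < m := by omega
  set i0 : Fin m := ⟨((j : ℕ) + 1) % m, Nat.mod_lt _ hm0⟩ with hi0
  have h1 : ucoef m q (fun i => w i + evec m j i)
      = ucoef m q w + ∑ t : Fin m, cw m ^ (q * (t : ℕ)) * ((evec m j t : ℝ) : ℂ) := by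
    simp only [ucoef]
    rw [← Finset.sum_add_distrib]
    refine Finset.sum_congr rfl fun t _ => ?_
    push_cast
    ring
  rw [h1]
  congr 1
  have h2 : ∑ t : Fin m, cw m ^ (q * (t : ℕ)) * ((evec m j t : ℝ) : ℂ)
      = cw m ^ (q * ((( j : ℕ) + 1) % m)) := by
    rw [Finset.sum_eq_single i0]
    · simp [evec, hi0]
    · intro t _ ht
      have : (t : ℕ) ≠ ((j : ℕ) + 1) % m := by
        intro h; exact ht (Fin.ext (by simp [hi0, h]))
      simp [evec, this]
    · intro h; exact absurd (Finset.mem_univ _) h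
  rw [h2, cw_pow_mod hm0]
  have e1 : q * (((j:ℕ)+1) % m) % m = (q * ((j:ℕ)+1)) % m :=
    Nat.ModEq.mul_left q (Nat.mod_modEq _ m)
  rw [e1, ← cw_pow_mod hm0, show q * ((j:ℕ)+1) = q * (j:ℕ) + q by ring, pow_add]
  ring

omit hR in
lemma alg_single (q : ℕ) (w : Fin m → ℝ) :
    ∑ j : Fin m, ((w j : ℝ) : ℂ) * ucoef m q (fun i => w i + evec m j i)
      = (∑ j : Fin m, ((w j : ℝ) : ℂ)) * ucoef m q w + cw m ^ q * ucoef m q w := by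
  have expand : ∀ j : Fin m, ((w j : ℝ) : ℂ) * ucoef m q (fun i => w i + evec m j i)
      = (w j : ℂ) * ucoef m q w + cw m ^ q * (cw m ^ (q * (j : ℕ)) * (w j : ℂ)) := by
    intro j
    rw [ucoef_shift hm q w j]
    ring
  rw [Finset.sum_congr rfl fun j _ => expand j, Finset.sum_add_distrib, ← Finset.mul_sum,
    ← Finset.sum_mul]
  rfl

omit hR in
lemma alg_prod (k l : ℕ) (w : Fin m → ℝ) :
    ∑ j : Fin m, ((w j : ℝ) : ℂ) *
        (ucoef m k (fun i => w i + evec m j i) * ucoef m l (fun i => w i + evec m j i))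
      = (∑ j : Fin m, ((w j : ℝ) : ℂ)) * (ucoef m k w * ucoef m l w)
        + (cw m ^ k + cw m ^ l) * (ucoef m k w * ucoef m l w)
        + cw m ^ (k + l) * ucoef m (k + l) w := by
  have expand : ∀ j : Fin m, ((w j : ℝ) : ℂ) *
      (ucoef m k (fun i => w i + evec m j i) * ucoef m l (fun i => w i + evec m j i))
      = (w j : ℂ) * (ucoef m k w * ucoef m l w)
        + (cw m ^ k * ucoef m l w) * (cw m ^ (k * (j : ℕ)) * (w j : ℂ))
        + (cw m ^ l * ucoef m k w) * (cw m ^ (l * (j : ℕ)) * (w j : ℂ))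
        + (cw m ^ k * cw m ^ l) * (cw m ^ ((k + l) * (j : ℕ)) * (w j : ℂ)) := by
    intro j
    rw [ucoef_shift hm k w j, ucoef_shift hm l w j]
    have : cw m ^ ((k + l) * (j : ℕ)) = cw m ^ (k * (j : ℕ)) * cw m ^ (l * (j : ℕ)) := by
      rw [← pow_add]; congr 1; ring
    rw [this]
    ring
  rw [Finset.sum_congr rfl fun j _ => expand j]
  rw [Finset.sum_add_distrib, Finset.sum_add_distrib, Finset.sum_add_distrib]
  rw [← Finset.mul_sum, ← Finset.mul_sum, ← Finset.mul_sum, ← Finset.sum_mul]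
  have hk : ∑ j : Fin m, cw m ^ (k * (j : ℕ)) * ((w j : ℝ) : ℂ) = ucoef m k w := rfl
  have hl : ∑ j : Fin m, cw m ^ (l * (j : ℕ)) * ((w j : ℝ) : ℂ) = ucoef m l w := rfl
  have hkl : ∑ j : Fin m, cw m ^ ((k + l) * (j : ℕ)) * ((w j : ℝ) : ℂ) = ucoef m (k + l) w := rfl
  rw [hk, hl, hkl, pow_add]
  ring

lemma abs_R_coord (n : ℕ) : ∀ᵐ ω ∂μ, ∀ i, |R n ω i| ≤ (n : ℝ) + 1 := by
  filter_upwards [sumR hm hR n] with ω hω i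
  rw [_root_.abs_of_nonneg (R_nonneg hm hR n ω i), ← hω]
  exact Finset.single_le_sum (fun t _ => R_nonneg hm hR n ω t) (Finset.mem_univ i)

lemma ucoef_comp_abs (n q : ℕ) :
    ∀ᵐ ω ∂μ, ‖ucoef m q (R n ω)‖ ≤ m * ((n : ℝ) + 1) := by
  filter_upwards [abs_R_coord hm hR n] with ω hω
  exact ucoef_abs_le fun t => hω t

lemma ucoef_shift_abs (n q : ℕ) :
    ∀ᵐ ω ∂μ, ∀ j : Fin m,
      ‖ucoef m q (fun i => R n ω i + evec m j i)‖ ≤ m * ((n : ℝ) + 2) := by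
  filter_upwards [abs_R_coord hm hR n] with ω hω j
  refine ucoef_abs_le fun t => ?_
  have h1 : |R n ω t| ≤ (n : ℝ) + 1 := hω t
  have h2 : |evec m j t| ≤ 1 := by
    simp only [evec]
    split <;> norm_num
  calc |R n ω t + evec m j t| ≤ |R n ω t| + |evec m j t| := abs_add_le _ _
    _ ≤ ((n : ℝ) + 1) + 1 := add_le_add h1 h2
    _ = (n : ℝ) + 2 := by ring

lemma integrable_comp (n : ℕ) {h : (Fin m → ℝ) → ℂ} (hmeas : Measurable h) {C : ℝ}
    (hb : ∀ᵐ ω ∂μ, ‖h (R n ω)‖ ≤ C) :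
    Integrable (fun ω => h (R n ω)) μ := by
  haveI := hR.isProb
  refine Integrable.mono' (integrable_const C) (hmeas.comp (hR.meas n)).aestronglyMeasurable ?_
  filter_upwards [hb] with ω hω
  exact hω

lemma step_int (n : ℕ) {h : (Fin m → ℝ) → ℂ} (hmeas : Measurable h) {C : ℝ}
    (hb : ∀ᵐ ω ∂μ, ∀ j : Fin m, ‖h (fun i => R n ω i + evec m j i)‖ ≤ C) :
    ∫ ω, h (R (n+1) ω) ∂μ
      = ∫ ω, ∑ j : Fin m, Complex.ofReal (R n ω j / (n+1))
          * h (fun i => R n ω i + evec m j i) ∂μ := by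
  haveI := hR.isProb
  have hshift_meas : ∀ j : Fin m, Measurable (fun w : Fin m → ℝ => h (fun i => w i + evec m j i)) := by
    intro j
    exact hmeas.comp (measurable_pi_iff.mpr fun i => (measurable_pi_apply i).add_const _)
  have hC0 : 0 ≤ C := by
    rcases hb.exists with ⟨ω, hω⟩
    exact le_trans (norm_nonneg _) (hω ⟨0, by omega⟩)
  -- step A: a.e. rewrite
  have stepA : ∫ ω, h (R (n+1) ω) ∂μ
      = ∫ ω, ∑ j : Fin m, Complex.ofReal (Set.indicator (Aset R n j) (fun _ => (1:ℝ)) ω)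
          * h (fun i => R n ω i + evec m j i) ∂μ := by
    refine integral_congr_ae ?_
    filter_upwards [oneA hm hR n (sumR hm hR n)] with ω hone
    obtain ⟨j0, hj0⟩ := exists_step hm hR hone
    have hj0' : ω ∈ Aset R n j0 := hj0
    rw [Finset.sum_eq_single j0]
    · have : Set.indicator (Aset R n j0) (fun _ => (1:ℝ)) ω = 1 := by
        simp [Set.indicator_apply, hj0']
      rw [this, hj0]
      simp
    · intro j _ hj
      have : ω ∉ Aset R n j := fun hmem => hj (Aset_disj hm hmem hj0')
      simp [Set.indicator_apply, this]
    · intro habs; exact absurd (Finset.mem_univ _) habs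
  -- integrability of each indicator term
  have hint1 : ∀ j : Fin m, Integrable (fun ω =>
      Complex.ofReal (Set.indicator (Aset R n j) (fun _ => (1:ℝ)) ω)
        * h (fun i => R n ω i + evec m j i)) μ := by
    intro j
    refine Integrable.mono' (integrable_const C) ?_ ?_
    · exact ((Complex.measurable_ofReal.comp
        (measurable_const.indicator (Aset_meas hm hR n j))).mul
        ((hshift_meas j).comp (hR.meas n))).aestronglyMeasurable
    · filter_upwards [hb] with ω hω
      rw [norm_mul, Complex.norm_real, Real.norm_eq_abs]
      have hind : |Set.indicator (Aset R n j) (fun _ => (1:ℝ)) ω| ≤ 1 := by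
        by_cases hc : ω ∈ Aset R n j <;> simp [Set.indicator_apply, hc]
      calc _ ≤ 1 * C := mul_le_mul hind (hω j) (norm_nonneg _) one_pos.le
        _ = C := one_mul C
  have hint2 : ∀ j : Fin m, Integrable (fun ω =>
      Complex.ofReal (R n ω j / (n+1)) * h (fun i => R n ω i + evec m j i)) μ := by
    intro j
    refine Integrable.mono' (integrable_const C) ?_ ?_
    · exact ((Complex.measurable_ofReal.comp
        (((measurable_pi_apply j).comp (hR.meas n)).div_const _)).mul
        ((hshift_meas j).comp (hR.meas n))).aestronglyMeasurable
    · filter_upwards [hb, abs_R_coord hm hR n] with ω hω hcoord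
      rw [norm_mul, Complex.norm_real, Real.norm_eq_abs]
      have hq : |R n ω j / ((n:ℝ)+1)| ≤ 1 := by
        rw [abs_div]
        rw [div_le_one (by positivity)]
        calc |R n ω j| ≤ (n:ℝ) + 1 := hcoord j
          _ ≤ |(n:ℝ) + 1| := le_abs_self _
      calc _ ≤ 1 * C := mul_le_mul hq (hω j) (norm_nonneg _) one_pos.le
        _ = C := one_mul C
  rw [stepA, integral_finset_sum _ fun j _ => hint1 j,
    integral_finset_sum _ fun j _ => hint2 j]
  refine Finset.sum_congr rfl fun j _ => ?_
  refine key_pullout_c hm hR n j (hshift_meas j) (C := C) ?_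
  filter_upwards [hb] with ω hω
  exact hω j

lemma sum_cast_c (n : ℕ) {ω : Ω} (hω : ∑ j, R n ω j = (n : ℝ) + 1) :
    ∑ j : Fin m, ((R n ω j : ℝ) : ℂ) = (n : ℂ) + 1 := by
  have : ((∑ j, R n ω j : ℝ) : ℂ) = (n : ℂ) + 1 := by rw [hω]; push_cast; ring
  rw [← this]
  push_cast
  ring

lemma step_gE (q n : ℕ) :
    ∫ ω, ucoef m q (R (n+1) ω) ∂μ
      = (((n : ℂ) + 1 + cw m ^ q) / ((n : ℂ) + 1)) * ∫ ω, ucoef m q (R n ω) ∂μ := by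
  rw [step_int hm hR n (ucoef_meas q) (ucoef_shift_abs hm hR n q)]
  have keyae : (fun ω => ∑ j : Fin m, Complex.ofReal (R n ω j / (n+1))
      * ucoef m q (fun i => R n ω i + evec m j i))
      =ᵐ[μ] fun ω => (((n : ℂ) + 1 + cw m ^ q) / ((n : ℂ) + 1)) * ucoef m q (R n ω) := by
    filter_upwards [sumR hm hR n] with ω hω
    have hn1 : ((n : ℂ) + 1) ≠ 0 := by
      have := Nat.cast_add_one_ne_zero (R := ℂ) n
      exact_mod_cast this
    calc ∑ j : Fin m, Complex.ofReal (R n ω j / (n+1))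
          * ucoef m q (fun i => R n ω i + evec m j i)
        = (∑ j : Fin m, ((R n ω j : ℝ) : ℂ)
            * ucoef m q (fun i => R n ω i + evec m j i)) / ((n : ℂ) + 1) := by
          rw [Finset.sum_div]
          refine Finset.sum_congr rfl fun j _ => ?_
          push_cast
          ring
      _ = ((∑ j : Fin m, ((R n ω j : ℝ) : ℂ)) * ucoef m q (R n ω)
            + cw m ^ q * ucoef m q (R n ω)) / ((n : ℂ) + 1) := by
          rw [alg_single hm q (R n ω)]
      _ = (((n : ℂ) + 1 + cw m ^ q) / ((n : ℂ) + 1)) * ucoef m q (R n ω) := by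
          rw [sum_cast_c hm hR n hω]
          field_simp
  rw [integral_congr_ae keyae, integral_const_mul]

lemma step_fE (k l n : ℕ) :
    ∫ ω, ucoef m k (R (n+1) ω) * ucoef m l (R (n+1) ω) ∂μ
      = (((n : ℂ) + 1 + cw m ^ k + cw m ^ l) / ((n : ℂ) + 1))
          * ∫ ω, ucoef m k (R n ω) * ucoef m l (R n ω) ∂μ
        + (cw m ^ (k + l) / ((n : ℂ) + 1)) * ∫ ω, ucoef m (k + l) (R n ω) ∂μ := by
  have hprod_meas : Measurable (fun w : Fin m → ℝ => ucoef m k w * ucoef m l w) :=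
    (ucoef_meas k).mul (ucoef_meas l)
  have hbnd : ∀ᵐ ω ∂μ, ∀ j : Fin m, ‖
      (ucoef m k (fun i => R n ω i + evec m j i) * ucoef m l (fun i => R n ω i + evec m j i))‖
        ≤ (m * ((n:ℝ)+2)) * (m * ((n:ℝ)+2)) := by
    filter_upwards [ucoef_shift_abs hm hR n k, ucoef_shift_abs hm hR n l] with ω h1 h2 j
    rw [norm_mul]
    exact mul_le_mul (h1 j) (h2 j) (norm_nonneg _) (by positivity)
  rw [step_int hm hR n hprod_meas hbnd]
  have keyae : (fun ω => ∑ j : Fin m, Complex.ofReal (R n ω j / (n+1))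
      * (ucoef m k (fun i => R n ω i + evec m j i) * ucoef m l (fun i => R n ω i + evec m j i)))
      =ᵐ[μ] fun ω => (((n : ℂ) + 1 + cw m ^ k + cw m ^ l) / ((n : ℂ) + 1))
          * (ucoef m k (R n ω) * ucoef m l (R n ω))
        + (cw m ^ (k + l) / ((n : ℂ) + 1)) * ucoef m (k + l) (R n ω) := by
    filter_upwards [sumR hm hR n] with ω hω
    have hn1 : ((n : ℂ) + 1) ≠ 0 := by
      have := Nat.cast_add_one_ne_zero (R := ℂ) n
      exact_mod_cast this
    calc ∑ j : Fin m, Complex.ofReal (R n ω j / (n+1))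
          * (ucoef m k (fun i => R n ω i + evec m j i)
              * ucoef m l (fun i => R n ω i + evec m j i))
        = (∑ j : Fin m, ((R n ω j : ℝ) : ℂ)
            * (ucoef m k (fun i => R n ω i + evec m j i)
              * ucoef m l (fun i => R n ω i + evec m j i))) / ((n : ℂ) + 1) := by
          rw [Finset.sum_div]
          refine Finset.sum_congr rfl fun j _ => ?_
          push_cast
          ring
      _ = ((∑ j : Fin m, ((R n ω j : ℝ) : ℂ)) * (ucoef m k (R n ω) * ucoef m l (R n ω))
            + (cw m ^ k + cw m ^ l) * (ucoef m k (R n ω) * ucoef m l (R n ω))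
            + cw m ^ (k + l) * ucoef m (k + l) (R n ω)) / ((n : ℂ) + 1) := by
          rw [alg_prod hm k l (R n ω)]
      _ = _ := by
          rw [sum_cast_c hm hR n hω]
          field_simp
          ring
  rw [integral_congr_ae keyae]
  have if1 : Integrable (fun ω => ucoef m k (R n ω) * ucoef m l (R n ω)) μ := by
    refine integrable_comp hm hR n hprod_meas (C := (m * ((n:ℝ)+1)) * (m * ((n:ℝ)+1))) ?_
    filter_upwards [ucoef_comp_abs hm hR n k, ucoef_comp_abs hm hR n l] with ω h1 h2
    rw [norm_mul]
    exact mul_le_mul h1 h2 (norm_nonneg _) (by positivity)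
  have if2 : Integrable (fun ω => ucoef m (k + l) (R n ω)) μ :=
    integrable_comp hm hR n (ucoef_meas (k+l)) (ucoef_comp_abs hm hR n (k+l))
  rw [integral_add (if1.const_mul _) (if2.const_mul _), integral_const_mul, integral_const_mul]

lemma ucoef_R0 (q : ℕ) (ω : Ω) : ucoef m q (R 0 ω) = 1 := by
  rw [hR.init ω]
  unfold ucoef
  rw [Finset.sum_eq_single (⟨0, by omega⟩ : Fin m)]
  · simp
  · intro t _ ht
    simp [ht]
  · intro h; exact absurd (Finset.mem_univ _) h

lemma gE_closed (q n : ℕ) :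
    ∫ ω, ucoef m q (R n ω) ∂μ
      = ∏ t ∈ Finset.Icc 1 n, (((t : ℂ) + cw m ^ q) / (t : ℂ)) := by
  haveI := hR.isProb
  induction n with
  | zero =>
    simp only [Finset.Icc_self, Finset.Icc_eq_empty_of_lt (by norm_num : (1:ℕ) > 0)]
    rw [integral_congr_ae (Eventually.of_forall fun ω => ucoef_R0 hm hR q ω)]
    simp
  | succ n ih =>
    rw [step_gE hm hR q n, ih, Finset.prod_Icc_succ_top (by omega : 1 ≤ n + 1)]
    push_cast
    ring

lemma T_rec (a b : ℂ) (n : ℕ) :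
    (∏ s ∈ Finset.Icc 1 (n+1), (((s : ℂ) + a) / (s : ℂ)))
      + ∑ s ∈ Finset.Icc 1 (n+1), (b / (s : ℂ))
          * (∏ t ∈ Finset.Icc 1 (s-1), (((t : ℂ) + b) / (t : ℂ)))
          * (∏ t ∈ Finset.Icc (s+1) (n+1), (((t : ℂ) + a) / (t : ℂ)))
    = (((n : ℂ) + 1 + a) / ((n : ℂ) + 1))
        * ((∏ s ∈ Finset.Icc 1 n, (((s : ℂ) + a) / (s : ℂ)))
          + ∑ s ∈ Finset.Icc 1 n, (b / (s : ℂ))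
              * (∏ t ∈ Finset.Icc 1 (s-1), (((t : ℂ) + b) / (t : ℂ)))
              * (∏ t ∈ Finset.Icc (s+1) n, (((t : ℂ) + a) / (t : ℂ))))
      + (b / ((n : ℂ) + 1)) * ∏ t ∈ Finset.Icc 1 n, (((t : ℂ) + b) / (t : ℂ)) := by
  rw [Finset.prod_Icc_succ_top (by omega : 1 ≤ n + 1),
    Finset.sum_Icc_succ_top (by omega : 1 ≤ n + 1)]
  have hlast : (b / ((n+1 : ℕ) : ℂ))
      * (∏ t ∈ Finset.Icc 1 ((n+1)-1), (((t : ℂ) + b) / (t : ℂ)))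
      * (∏ t ∈ Finset.Icc ((n+1)+1) (n+1), (((t : ℂ) + a) / (t : ℂ)))
      = (b / ((n : ℂ) + 1)) * ∏ t ∈ Finset.Icc 1 n, (((t : ℂ) + b) / (t : ℂ)) := by
    rw [Finset.Icc_eq_empty (by omega : ¬ (n+1)+1 ≤ n+1)]
    simp only [Nat.add_sub_cancel, Finset.prod_empty, mul_one]
    push_cast
    ring
  have hsum : ∑ s ∈ Finset.Icc 1 n, (b / (s : ℂ))
      * (∏ t ∈ Finset.Icc 1 (s-1), (((t : ℂ) + b) / (t : ℂ)))
      * (∏ t ∈ Finset.Icc (s+1) (n+1), (((t : ℂ) + a) / (t : ℂ)))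
      = ∑ s ∈ Finset.Icc 1 n, ((b / (s : ℂ))
      * (∏ t ∈ Finset.Icc 1 (s-1), (((t : ℂ) + b) / (t : ℂ)))
      * (∏ t ∈ Finset.Icc (s+1) n, (((t : ℂ) + a) / (t : ℂ))))
        * ((((n+1 : ℕ) : ℂ) + a) / ((n+1 : ℕ) : ℂ)) := by
    refine Finset.sum_congr rfl fun s hs => ?_
    have hsn : s ≤ n := (Finset.mem_Icc.mp hs).2
    rw [Finset.prod_Icc_succ_top (by omega : s + 1 ≤ n + 1)]
    ring
  rw [hlast, hsum, ← Finset.sum_mul]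
  push_cast
  ring

end Urn

theorem stmt6 {Ω : Type*} [MeasurableSpace Ω] (μ : Measure Ω) (m : ℕ) (hm : 2 ≤ m)
    (R : ℕ → Ω → Fin m → ℝ) (hR : IsCyclicUrn μ m ⟨0, by omega⟩ R)
    (k l : ℕ) (hk : k < m) (hl : l < m) (n : ℕ) :
    ∫ ω, ucoef m k (R n ω) * ucoef m l (R n ω) ∂μ =
      (∏ s ∈ Finset.Icc 1 n, (((s : ℂ) + cw m ^ k + cw m ^ l) / (s : ℂ))) +
      ∑ s ∈ Finset.Icc 1 n, (cw m ^ (k + l) / (s : ℂ)) *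
        (∏ t ∈ Finset.Icc 1 (s - 1), (((t : ℂ) + cw m ^ (k + l)) / (t : ℂ))) *
        (∏ t ∈ Finset.Icc (s + 1) n, (((t : ℂ) + cw m ^ k + cw m ^ l) / (t : ℂ))) := by
  induction n with
  | zero =>
    haveI := hR.isProb
    have hconst : ∀ ω, ucoef m k (R 0 ω) * ucoef m l (R 0 ω) = 1 := fun ω => by
      rw [ucoef_R0 hm hR k ω, ucoef_R0 hm hR l ω, mul_one]
    rw [integral_congr_ae (Filter.Eventually.of_forall hconst)]
    rw [Finset.Icc_eq_empty (by omega : ¬ (1:ℕ) ≤ 0)]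
    simp
  | succ n ih =>
    rw [step_fE hm hR k l n, ih, gE_closed hm hR (k+l) n]
    have hT := (T_rec hm hR (cw m ^ k + cw m ^ l) (cw m ^ (k+l)) n).symm
    simp only [add_assoc]
    simp only [add_assoc] at hT
    exact hT

end
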